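/- (Discrete universal chord theorem) Let G be a finite connected subgraph of the infinite grid graph on ℤ², let u be an integer vector, and let n be a positive integer. If G realises n·u, then G realises u. -/

import Mathlib

def gridAdj (a b : ℤ × ℤ) : Prop := |a.1 - b.1| + |a.2 - b.2| = 1

lemma gridAdj_cases {a b : ℤ × ℤ} (h : gridAdj a b) :
    (a.1 = b.1 + 1 ∧ a.2 = b.2) ∨ (a.1 = b.1 - 1 ∧ a.2 = b.2) ∨
    (a.1 = b.1 ∧ a.2 = b.2 + 1) ∨ (a.1 = b.1 ∧ a.2 = b.2 - 1) := by
  unfold gridAdj at h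
  rcases abs_cases (a.1 - b.1) with ⟨h1, _⟩ | ⟨h1, _⟩ <;>
    rcases abs_cases (a.2 - b.2) with ⟨h2, _⟩ | ⟨h2, _⟩ <;> omega

lemma gridAdj_of_cases {a b : ℤ × ℤ}
    (h : (a.1 = b.1 + 1 ∧ a.2 = b.2) ∨ (a.1 = b.1 - 1 ∧ a.2 = b.2) ∨
    (a.1 = b.1 ∧ a.2 = b.2 + 1) ∨ (a.1 = b.1 ∧ a.2 = b.2 - 1)) : gridAdj a b := by
  unfold gridAdj
  rcases abs_cases (a.1 - b.1) with ⟨h1, _⟩ | ⟨h1, _⟩ <;>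
    rcases abs_cases (a.2 - b.2) with ⟨h2, _⟩ | ⟨h2, _⟩ <;> omega

lemma gridAdj_comm {a b : ℤ × ℤ} (h : gridAdj a b) : gridAdj b a := by
  apply gridAdj_of_cases; rcases gridAdj_cases h with ⟨h1,h2⟩|⟨h1,h2⟩|⟨h1,h2⟩|⟨h1,h2⟩ <;> omega

lemma gridAdj_translate {a b c : ℤ × ℤ} (h : gridAdj a b) : gridAdj (a + c) (b + c) := by
  apply gridAdj_of_cases
  have := gridAdj_cases h
  simp only [Prod.fst_add, Prod.snd_add]
  rcases this with ⟨h1,h2⟩|⟨h1,h2⟩|⟨h1,h2⟩|⟨h1,h2⟩ <;> omega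

lemma tele_Icc (f : ℤ → ℤ) (a : ℤ) : ∀ (n : ℕ) (b : ℤ), b = a + n →
    ∑ t ∈ Finset.Icc a b, (f (t + 1) - f t) = f (b + 1) - f a := by
  intro n
  induction n with
  | zero => intro b hb; subst hb; simp
  | succ m ih =>
      intro b hb
      have hb' : b = (a + m) + 1 := by push_cast at hb ⊢; omega
      subst hb'
      have : Finset.Icc a (a + (m:ℤ) + 1) = insert (a + m + 1) (Finset.Icc a (a + m)) := by
        ext x; simp only [Finset.mem_Icc, Finset.mem_insert]; omega
      rw [this, Finset.sum_insert (by simp), ih (a + m) rfl]; ring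
section Core

variable (Q : ℤ → ℤ × ℤ) (M : ℤ)

def isUp (t y : ℤ) : Prop :=
  (Q (t+1)).1 = (Q t).1 ∧ (Q (t+1)).2 = (Q t).2 + 1 ∧ (Q t).2 = y

def isDown (t y : ℤ) : Prop :=
  (Q (t+1)).1 = (Q t).1 ∧ (Q (t+1)).2 = (Q t).2 - 1 ∧ (Q t).2 = y + 1

open Classical in
noncomputable def crossVal (x : ℤ × ℤ) (t : ℤ) : ℤ :=
  (if isUp Q t x.2 ∧ x.1 ≤ (Q t).1 then 1 else 0)
    - (if isDown Q t x.2 ∧ x.1 ≤ (Q t).1 then 1 else 0)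

def BB : ℤ := ∑ i ∈ Finset.range M.toNat, |(Q i).2|

def T0 (y : ℤ) : ℤ := (|y| + BB Q M + 1) * M

def T1 (b : ℤ) : ℤ := T0 Q M b + T0 Q M (b+1)

noncomputable def Hw (x : ℤ × ℤ) (T : ℤ) : ℤ := ∑ t ∈ Finset.Icc (-T) T, crossVal Q x t

noncomputable def HH (x : ℤ × ℤ) : ℤ := Hw Q x (T1 Q M x.2)

def crossP (y c : ℤ) : Prop := ∃ t, (isUp Q t y ∨ isDown Q t y) ∧ (Q t).1 = c

variable {Q M}
variable {k p q : ℤ}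

section Lemmas

variable (hM : 1 ≤ M) (hk : 2 ≤ k) (hq : 1 ≤ q)
  (hadj : ∀ t, gridAdj (Q (t+1)) (Q t))
  (hper : ∀ t, Q (t + M) = Q t + k • ((p, q) : ℤ × ℤ))

include hadj in
lemma hstep (t : ℤ) :
    ((Q (t+1)).1 = (Q t).1 + 1 ∧ (Q (t+1)).2 = (Q t).2) ∨
    ((Q (t+1)).1 = (Q t).1 - 1 ∧ (Q (t+1)).2 = (Q t).2) ∨
    ((Q (t+1)).1 = (Q t).1 ∧ (Q (t+1)).2 = (Q t).2 + 1) ∨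
    ((Q (t+1)).1 = (Q t).1 ∧ (Q (t+1)).2 = (Q t).2 - 1) := gridAdj_cases (hadj t)

lemma BB_nonneg : 0 ≤ BB Q M := Finset.sum_nonneg fun i _ => abs_nonneg _

include hM in
lemma T0_nonneg (y : ℤ) : 0 ≤ T0 Q M y := by
  have := BB_nonneg (Q := Q) (M := M)
  have h1 : (0:ℤ) ≤ |y| := abs_nonneg _
  have : (0:ℤ) ≤ (|y| + BB Q M + 1) := by omega
  exact mul_nonneg this (by omega)

include hM in
lemma T1_nonneg (b : ℤ) : 0 ≤ T1 Q M b := by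
  have := T0_nonneg (Q := Q) hM b
  have := T0_nonneg (Q := Q) hM (b+1)
  unfold T1; omega

include hM in
lemma Ybound {r : ℤ} (h0 : 0 ≤ r) (h1 : r < M) : |(Q r).2| ≤ BB Q M := by
  have hmem : r.toNat ∈ Finset.range M.toNat := by
    simp only [Finset.mem_range]; omega
  have hc : ((r.toNat : ℤ)) = r := by omega
  unfold BB
  calc |(Q r).2| = |(Q ((r.toNat : ℤ))).2| := by rw [hc]
  _ ≤ ∑ i ∈ Finset.range M.toNat, |(Q i).2| :=
      Finset.single_le_sum (f := fun i : ℕ => |(Q (i:ℤ)).2|) (fun i _ => abs_nonneg _) hmem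

include hper in
lemma hperN (c t : ℤ) : Q (t + c * M) = Q t + (c * k) • ((p, q) : ℤ × ℤ) := by
  induction c using Int.induction_on with
  | zero => simp
  | succ n ih =>
      have : t + (n + 1 : ℤ) * M = (t + n * M) + M := by ring
      rw [this, hper, ih]
      have : ((n:ℤ) * k) • ((p, q) : ℤ × ℤ) + k • ((p, q) : ℤ × ℤ)
          = (((n:ℤ)+1) * k) • ((p, q) : ℤ × ℤ) := by
        rw [← add_smul]; ring_nf
      rw [add_assoc, this]
  | pred n ih =>
      have he : t + (-(n:ℤ) - 1) * M + M = t + (-(n:ℤ)) * M := by ring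
      have := hper (t + (-(n:ℤ) - 1) * M)
      rw [he, ih] at this
      have hgoal : Q (t + (-(n:ℤ) - 1) * M)
          = Q t + ((-(n:ℤ)) * k) • ((p, q) : ℤ × ℤ) - k • ((p, q) : ℤ × ℤ) := by
        rw [this]; abel
      rw [hgoal]
      have h2 : ((-(n:ℤ)) * k) • ((p, q) : ℤ × ℤ) - k • ((p, q) : ℤ × ℤ)
          = ((-(n:ℤ) - 1) * k) • ((p, q) : ℤ × ℤ) := by
        rw [← sub_smul]; ring_nf
      rw [add_sub_assoc, h2]

include hM hk hq hper in
lemma rowT {t y : ℤ} (h : (Q t).2 = y) : |t| ≤ T0 Q M y := by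
  have hM0 : (0:ℤ) < M := by omega
  set r := t % M with hr
  set c := t / M with hc
  have hdec : M * c + r = t := Int.mul_ediv_add_emod t M
  have hdec' : c * M + r = t := by rw [mul_comm]; exact hdec
  have hr0 : 0 ≤ r := Int.emod_nonneg t (by omega)
  have hr1 : r < M := Int.emod_lt_of_pos t hM0
  have hQ : Q t = Q r + (c * k) • ((p, q) : ℤ × ℤ) := by
    have := hperN hper c r
    rw [show r + c * M = t by omega] at this
    exact this
  have hy : y = (Q r).2 + c * k * q := by
    rw [← h, hQ]; simp [Prod.snd_add, mul_assoc]
  have hB : |(Q r).2| ≤ BB Q M := Ybound hM hr0 hr1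
  have hkq : 2 ≤ k * q := by nlinarith
  have h2 : |c * k * q| ≤ |y| + BB Q M := by
    rw [abs_le]; rw [abs_le] at hB
    have := abs_nonneg y
    have h3 : -|y| ≤ y ∧ y ≤ |y| := abs_le.mp le_rfl
    omega
  have h4 : |c| ≤ |c * k * q| := by
    rw [mul_assoc, abs_mul]
    exact le_mul_of_one_le_right (abs_nonneg c) (by rw [abs_of_nonneg (by omega : (0:ℤ) ≤ k * q)]; omega)
  have h5 : |c| ≤ |y| + BB Q M := le_trans h4 h2
  have h6 : |t| ≤ M * |c| + r := by
    rw [← hdec]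
    calc |M * c + r| ≤ |M * c| + |r| := abs_add_le _ _
    _ = M * |c| + r := by rw [abs_mul, abs_of_nonneg (by omega : (0:ℤ) ≤ M), abs_of_nonneg hr0]
  have h7 : M * |c| ≤ M * (|y| + BB Q M) := by
    exact mul_le_mul_of_nonneg_left h5 (by omega)
  have : T0 Q M y = M * (|y| + BB Q M) + M := by unfold T0; ring
  omega

include hM hk hq hper in
lemma rows_top {y t : ℤ} (h : T0 Q M y ≤ t) : y < (Q t).2 := by
  have hM0 : (0:ℤ) < M := by omega
  set r := t % M with hr
  set c := t / M with hc
  have hdec : M * c + r = t := Int.mul_ediv_add_emod t M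
  have hdec' : c * M + r = t := by rw [mul_comm]; exact hdec
  have hr0 : 0 ≤ r := Int.emod_nonneg t (by omega)
  have hr1 : r < M := Int.emod_lt_of_pos t hM0
  have hQ : Q t = Q r + (c * k) • ((p, q) : ℤ × ℤ) := by
    have := hperN hper c r
    rw [show r + c * M = t by omega] at this
    exact this
  have hy : (Q t).2 = (Q r).2 + c * k * q := by rw [hQ]; simp [Prod.snd_add, mul_assoc]
  have hB : |(Q r).2| ≤ BB Q M := Ybound hM hr0 hr1
  have hs : |y| + BB Q M + 1 ≤ c := by
    rw [hc, Int.le_ediv_iff_mul_le hM0]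
    unfold T0 at h; omega
  have hc0 : 0 ≤ c := by
    have := BB_nonneg (Q := Q) (M := M); have := abs_nonneg y; omega
  have hkq : 1 ≤ k * q := by nlinarith
  have : c ≤ c * (k * q) := le_mul_of_one_le_right hc0 hkq
  have h3 : -|y| ≤ y ∧ y ≤ |y| := abs_le.mp le_rfl
  rw [abs_le] at hB
  have : c * k * q = c * (k * q) := by ring
  omega

include hM hk hq hper in
lemma rows_bot {y t : ℤ} (h : t ≤ -(T0 Q M y)) : (Q t).2 < y := by
  have hM0 : (0:ℤ) < M := by omega
  set r := t % M with hr
  set c := t / M with hc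
  have hdec : M * c + r = t := Int.mul_ediv_add_emod t M
  have hdec' : c * M + r = t := by rw [mul_comm]; exact hdec
  have hr0 : 0 ≤ r := Int.emod_nonneg t (by omega)
  have hr1 : r < M := Int.emod_lt_of_pos t hM0
  have hQ : Q t = Q r + (c * k) • ((p, q) : ℤ × ℤ) := by
    have := hperN hper c r
    rw [show r + c * M = t by omega] at this
    exact this
  have hy : (Q t).2 = (Q r).2 + c * k * q := by rw [hQ]; simp [Prod.snd_add, mul_assoc]
  have hB : |(Q r).2| ≤ BB Q M := Ybound hM hr0 hr1
  set s := |y| + BB Q M + 1 with hsdef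
  have hs0 : 0 < s := by
    have := BB_nonneg (Q := Q) (M := M); have := abs_nonneg y; omega
  have hsM : (-s) * M = -((|y| + BB Q M + 1) * M) := by rw [hsdef]; ring
  have hsc : c ≤ -s := by
    have h1 : t ≤ (-s) * M := by unfold T0 at h; omega
    have h2 : t / M ≤ ((-s) * M) / M := Int.ediv_le_ediv hM0 h1
    rwa [Int.mul_ediv_cancel _ (by omega)] at h2
  have hkq : 1 ≤ k * q := by nlinarith
  have hcneg : c ≤ 0 := by omega
  have : c * (k * q) ≤ c * 1 := mul_le_mul_of_nonpos_left hkq hcneg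
  have h3 : -|y| ≤ y ∧ y ≤ |y| := abs_le.mp le_rfl
  rw [abs_le] at hB
  have : c * k * q = c * (k * q) := by ring
  omega

open Classical in
noncomputable def upv (Q : ℤ → ℤ × ℤ) (t y : ℤ) : ℤ := if isUp Q t y then 1 else 0

open Classical in
noncomputable def downv (Q : ℤ → ℤ × ℤ) (t y : ℤ) : ℤ := if isDown Q t y then 1 else 0

lemma crossVal_row {x : ℤ × ℤ} {t : ℤ} (h : crossVal Q x t ≠ 0) :
    (Q t).2 = x.2 ∨ (Q t).2 = x.2 + 1 := by
  unfold crossVal at h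
  by_cases h1 : isUp Q t x.2 ∧ x.1 ≤ (Q t).1
  · exact Or.inl h1.1.2.2
  · by_cases h2 : isDown Q t x.2 ∧ x.1 ≤ (Q t).1
    · exact Or.inr h2.1.2.2
    · rw [if_neg h1, if_neg h2] at h
      norm_num at h

include hM hk hq hper in
lemma Hw_stab {x : ℤ × ℤ} {T : ℤ} (hT : T1 Q M x.2 ≤ T) : Hw Q x T = HH Q M x := by
  unfold HH Hw
  symm
  apply Finset.sum_subset
  · apply Finset.Icc_subset_Icc <;> omega
  · intro t _ hnot
    by_contra hne
    have hrow := crossVal_row hne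
    have habs : |t| ≤ T1 Q M x.2 := by
      rcases hrow with h | h
      · have := rowT hM hk hq hper h
        have := T0_nonneg (Q := Q) hM (x.2 + 1)
        unfold T1; omega
      · have := rowT hM hk hq hper h
        have := T0_nonneg (Q := Q) hM x.2
        unfold T1; omega
    simp only [Finset.mem_Icc] at hnot
    rw [abs_le] at habs
    omega

include hM hk hq hadj hper in
lemma net_level (b T : ℤ) (hT : T1 Q M b ≤ T) :
    ∑ t ∈ Finset.Icc (-T) T, (upv Q t b - downv Q t b) = 1 := by
  classical
  have hpoint : ∀ t : ℤ, upv Q t b - downv Q t b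
      = (if b + 1 ≤ (Q (t+1)).2 then (1:ℤ) else 0) - (if b + 1 ≤ (Q t).2 then (1:ℤ) else 0) := by
    intro t
    unfold upv downv
    rcases hstep hadj t with ⟨h1,h2⟩|⟨h1,h2⟩|⟨h1,h2⟩|⟨h1,h2⟩ <;>
      · simp only [isUp, isDown, h1, h2, true_and, and_true]
        split_ifs <;> omega
  have hT0 : 0 ≤ T := le_trans (T1_nonneg hM b) hT
  have htele := tele_Icc (fun s => if b + 1 ≤ (Q s).2 then (1:ℤ) else 0) (-T) (2*T).toNat T (by omega)
  rw [Finset.sum_congr rfl (fun t _ => hpoint t), htele]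
  have htop : b < (Q (T+1)).2 := by
    apply rows_top hM hk hq hper
    have := T0_nonneg (Q := Q) hM (b+1)
    unfold T1 at hT; omega
  have hbot : (Q (-T)).2 < b + 1 := by
    apply rows_bot hM hk hq hper
    have := T0_nonneg (Q := Q) hM b
    unfold T1 at hT; omega
  rw [if_pos (by omega), if_neg (by omega)]
  norm_num

include hM hk hq hadj hper in
lemma cross_exists (b : ℤ) : ∃ t, isUp Q t b ∨ isDown Q t b := by
  by_contra hno
  push_neg at hno
  have := net_level hM hk hq hadj hper b (T1 Q M b) le_rfl
  rw [Finset.sum_eq_zero] at this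
  · exact absurd this (by norm_num)
  · intro t _
    have h1 := (hno t).1
    have h2 := (hno t).2
    unfold upv downv
    rw [if_neg h1, if_neg h2]
    ring

include hM hk hq hadj hper in
lemma H_all (a b : ℤ) (hcols : ∀ t, isUp Q t b ∨ isDown Q t b → a ≤ (Q t).1) :
    HH Q M (a,b) = 1 := by
  show Hw Q (a,b) (T1 Q M b) = 1
  unfold Hw
  have hcong : ∀ t ∈ Finset.Icc (-(T1 Q M b)) (T1 Q M b),
      crossVal Q (a,b) t = upv Q t b - downv Q t b := by
    intro t _
    unfold crossVal upv downv
    by_cases hu : isUp Q t b <;> by_cases hd : isDown Q t b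
    · simp [hu, hd, hcols t (Or.inl hu)]
    · simp [hu, hd, hcols t (Or.inl hu)]
    · simp [hu, hd, hcols t (Or.inr hd)]
    · simp [hu, hd]
  rw [Finset.sum_congr rfl hcong]
  exact net_level hM hk hq hadj hper b _ le_rfl

lemma H_none (a b : ℤ) (hcols : ∀ t, isUp Q t b ∨ isDown Q t b → (Q t).1 < a) :
    HH Q M (a,b) = 0 := by
  show Hw Q (a,b) (T1 Q M b) = 0
  unfold Hw
  apply Finset.sum_eq_zero
  intro t _
  unfold crossVal
  by_cases hu : isUp Q t b <;> by_cases hd : isDown Q t b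
  · simp [hu, hd, not_le.mpr (hcols t (Or.inl hu))]
  · simp [hu, hd, not_le.mpr (hcols t (Or.inl hu))]
  · simp [hu, hd, not_le.mpr (hcols t (Or.inr hd))]
  · simp [hu, hd]

lemma H_step_right (a b : ℤ)
    (hedge : ∀ t, ¬(isUp Q t b ∧ (Q t).1 = a) ∧ ¬(isDown Q t b ∧ (Q t).1 = a)) :
    HH Q M (a,b) = HH Q M (a+1,b) := by
  show Hw Q (a,b) (T1 Q M b) = Hw Q (a+1,b) (T1 Q M b)
  unfold Hw
  apply Finset.sum_congr rfl
  intro t _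
  unfold crossVal
  obtain ⟨e1, e2⟩ := hedge t
  by_cases hu : isUp Q t b <;> by_cases hd : isDown Q t b
  · have n1 : (Q t).1 ≠ a := fun h => e1 ⟨hu, h⟩
    simp only [hu, hd, true_and]
    split_ifs <;> omega
  · have n1 : (Q t).1 ≠ a := fun h => e1 ⟨hu, h⟩
    simp [hu, hd]
    split_ifs <;> omega
  · have n1 : (Q t).1 ≠ a := fun h => e2 ⟨hd, h⟩
    simp [hu, hd]
    split_ifs <;> omega
  · simp [hu, hd]

include hM hk hq hadj hper in
lemma H_step_up (a b : ℤ)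
    (hedge : ∀ t, ¬((Q t).1 = a - 1 ∧ (Q t).2 = b + 1 ∧ (Q (t+1)).1 = a ∧ (Q (t+1)).2 = b + 1)
      ∧ ¬((Q t).1 = a ∧ (Q t).2 = b + 1 ∧ (Q (t+1)).1 = a - 1 ∧ (Q (t+1)).2 = b + 1)) :
    HH Q M (a,b) = HH Q M (a,b+1) := by
  classical
  set T := T1 Q M b + T1 Q M (b+1) with hTdef
  have hT1b : 0 ≤ T1 Q M b := T1_nonneg hM b
  have hT1b1 : 0 ≤ T1 Q M (b+1) := T1_nonneg hM (b+1)
  have h1 : Hw Q (a,b) T = HH Q M (a,b) :=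
    Hw_stab hM hk hq hper (by show T1 Q M b ≤ T; omega)
  have h2 : Hw Q (a,b+1) T = HH Q M (a,b+1) :=
    Hw_stab hM hk hq hper (by show T1 Q M (b+1) ≤ T; omega)
  have key : Hw Q (a,b) T - Hw Q (a,b+1) T = 0 := by
    unfold Hw
    rw [← Finset.sum_sub_distrib]
    have hpoint : ∀ t : ℤ, crossVal Q (a,b) t - crossVal Q (a,b+1) t
        = (if (Q (t+1)).2 = b + 1 ∧ a ≤ (Q (t+1)).1 then (1:ℤ) else 0)
          - (if (Q t).2 = b + 1 ∧ a ≤ (Q t).1 then (1:ℤ) else 0) := by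
      intro t
      obtain ⟨e1, e2⟩ := hedge t
      rcases hstep hadj t with ⟨hx,hy⟩|⟨hx,hy⟩|⟨hx,hy⟩|⟨hx,hy⟩ <;>
        · simp only [crossVal, isUp, isDown, hx, hy, true_and, and_true] at e1 e2 ⊢
          split_ifs <;> omega
    have hT0 : 0 ≤ T := by omega
    have htele := tele_Icc (fun s => if (Q s).2 = b + 1 ∧ a ≤ (Q s).1 then (1:ℤ) else 0)
      (-T) (2*T).toNat T (by omega)
    rw [Finset.sum_congr rfl (fun t _ => hpoint t), htele]
    have htop : b + 1 < (Q (T+1)).2 := by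
      apply rows_top hM hk hq hper
      have h3 : T1 Q M (b+1) = T0 Q M (b+1) + T0 Q M (b+2) := by
        unfold T1; norm_num; ring_nf
      have := T0_nonneg (Q := Q) hM (b+2)
      omega
    have hbot : (Q (-T)).2 < b + 1 := by
      apply rows_bot hM hk hq hper
      have h3 : T1 Q M b = T0 Q M b + T0 Q M (b+1) := by unfold T1; rfl
      have := T0_nonneg (Q := Q) hM b
      omega
    rw [if_neg (by omega), if_neg (by omega)]
    ring
  omega

include hM hk hq hadj hper in
lemma H_adj {P P' : ℤ × ℤ} (hPP : gridAdj P' P)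
    (hP : ∀ s, Q s ≠ P) (hP' : ∀ s, Q s ≠ P') : HH Q M P = HH Q M P' := by
  obtain ⟨a, b⟩ := P
  obtain ⟨a', b'⟩ := P'
  simp only [ne_eq, Prod.ext_iff, not_and] at hP hP'
  rcases gridAdj_cases hPP with ⟨h1,h2⟩|⟨h1,h2⟩|⟨h1,h2⟩|⟨h1,h2⟩ <;>
    simp only [] at h1 h2 <;> rw [h1, h2] at hP' ⊢
  · -- P' = (a+1, b)
    apply H_step_right
    intro t
    constructor
    · rintro ⟨⟨_, _, hu3⟩, hc⟩
      exact hP t hc hu3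
    · rintro ⟨⟨hd1, hd2, hd3⟩, hc⟩
      exact hP (t+1) (by omega) (by omega)
  · -- P' = (a-1, b)
    have hs := H_step_right (Q := Q) (M := M) (a - 1) b ?_
    · rw [show a - 1 + 1 = a by ring] at hs
      exact hs.symm
    · intro t
      constructor
      · rintro ⟨⟨_, _, hu3⟩, hc⟩
        exact hP' t hc hu3
      · rintro ⟨⟨hd1, hd2, hd3⟩, hc⟩
        exact hP' (t+1) (by omega) (by omega)
  · -- P' = (a, b+1)
    apply H_step_up hM hk hq hadj hper
    intro t
    constructor
    · rintro ⟨he1, he2, he3, he4⟩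
      exact hP' (t+1) (by omega) (by omega)
    · rintro ⟨he1, he2, he3, he4⟩
      exact hP' t (by omega) (by omega)
  · -- P' = (a, b-1)
    have hs := H_step_up hM hk hq hadj hper a (b - 1) ?_
    · rw [show b - 1 + 1 = b by ring] at hs
      exact hs.symm
    · intro t
      constructor
      · rintro ⟨he1, he2, he3, he4⟩
        exact hP (t+1) (by omega) (by omega)
      · rintro ⟨he1, he2, he3, he4⟩
        exact hP t (by omega) (by omega)

include hadj in
lemma x_speed : ∀ t : ℤ, |(Q t).1 - (Q 0).1| ≤ |t| := by
  intro t
  induction t using Int.induction_on with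
  | zero => simp
  | succ n ih =>
      have hcast : |((n:ℤ))| = (n:ℤ) := abs_of_nonneg (by positivity)
      have hcast2 : |((n:ℤ) + 1)| = (n:ℤ) + 1 := abs_of_nonneg (by positivity)
      rw [abs_le] at ih ⊢
      rcases hstep hadj (n:ℤ) with ⟨h1,_⟩|⟨h1,_⟩|⟨h1,_⟩|⟨h1,_⟩ <;> omega
  | pred n ih =>
      have hcast : |(-(n:ℤ))| = (n:ℤ) := by rw [abs_neg]; exact abs_of_nonneg (by positivity)
      have hcast2 : |(-(n:ℤ) - 1)| = (n:ℤ) + 1 := by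
        rw [show -(n:ℤ) - 1 = -((n:ℤ)+1) by ring, abs_neg]; exact abs_of_nonneg (by positivity)
      have hs := hstep hadj (-(n:ℤ) - 1)
      rw [show -(n:ℤ) - 1 + 1 = -(n:ℤ) by ring] at hs
      rw [abs_le] at ih ⊢
      rcases hs with ⟨h1,_⟩|⟨h1,_⟩|⟨h1,_⟩|⟨h1,_⟩ <;> omega

lemma crossP_point {y c : ℤ} (h : crossP Q y c) :
    (∃ s, Q s = (c, y)) ∧ (∃ s, Q s = (c, y + 1)) := by
  obtain ⟨t, hud, hc⟩ := h
  rcases hud with hu | hd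
  · refine ⟨⟨t, Prod.ext_iff.mpr ⟨hc, hu.2.2⟩⟩, ⟨t+1, Prod.ext_iff.mpr ⟨?_, ?_⟩⟩⟩
    · rw [hu.1, hc]
    · rw [hu.2.1, hu.2.2]
  · refine ⟨⟨t+1, Prod.ext_iff.mpr ⟨?_, ?_⟩⟩, ⟨t, Prod.ext_iff.mpr ⟨hc, hd.2.2⟩⟩⟩
    · rw [hd.1, hc]
    · rw [hd.2.1, hd.2.2]; ring

include hM hk hq hadj hper in
lemma crossP_bound {y c : ℤ} (h : crossP Q y c) :
    |c| ≤ |(Q 0).1| + T0 Q M y + T0 Q M (y+1) := by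
  obtain ⟨t, hud, hc⟩ := h
  subst hc
  have hsp := x_speed hadj t
  have htri : |(Q t).1| ≤ |(Q 0).1| + |(Q t).1 - (Q 0).1| := by
    have := abs_sub_abs_le_abs_sub ((Q t).1) ((Q 0).1)
    omega
  rcases hud with hu | hd
  · have hrow := rowT hM hk hq hper hu.2.2
    have := T0_nonneg (Q := Q) hM (y+1)
    omega
  · have hrow := rowT hM hk hq hper hd.2.2
    have := T0_nonneg (Q := Q) hM y
    omega

include hper in
lemma isUp_shift (t y : ℤ) : isUp Q (t + M) (y + k*q) ↔ isUp Q t y := by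
  have e1 : Q (t + M + 1) = Q (t+1) + (k*p, k*q) := by
    rw [show t + M + 1 = (t+1) + M by ring, hper]; rfl
  have e2 : Q (t + M) = Q t + (k*p, k*q) := by rw [hper]; rfl
  unfold isUp
  rw [e1, e2]
  simp only [Prod.fst_add, Prod.snd_add]
  constructor <;> rintro ⟨u1, u2, u3⟩ <;> exact ⟨by omega, by omega, by omega⟩

include hper in
lemma isDown_shift (t y : ℤ) : isDown Q (t + M) (y + k*q) ↔ isDown Q t y := by
  have e1 : Q (t + M + 1) = Q (t+1) + (k*p, k*q) := by
    rw [show t + M + 1 = (t+1) + M by ring, hper]; rfl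
  have e2 : Q (t + M) = Q t + (k*p, k*q) := by rw [hper]; rfl
  unfold isDown
  rw [e1, e2]
  simp only [Prod.fst_add, Prod.snd_add]
  constructor <;> rintro ⟨u1, u2, u3⟩ <;> exact ⟨by omega, by omega, by omega⟩

include hper in
lemma crossP_shift (y c : ℤ) : crossP Q (y + k*q) (c + k*p) ↔ crossP Q y c := by
  constructor
  · rintro ⟨t, hud, hc⟩
    refine ⟨t - M, ?_, ?_⟩
    · have := isUp_shift hper (t - M) y
      have h2 := isDown_shift hper (t - M) y
      rw [show t - M + M = t by ring] at this h2
      rcases hud with hu | hd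
      · exact Or.inl (this.mp hu)
      · exact Or.inr (h2.mp hd)
    · have e2 : Q (t - M + M) = Q (t - M) + (k*p, k*q) := by rw [hper]; rfl
      rw [show t - M + M = t by ring] at e2
      have : (Q t).1 = (Q (t - M)).1 + k*p := by rw [e2]; rfl
      omega
  · rintro ⟨t, hud, hc⟩
    refine ⟨t + M, ?_, ?_⟩
    · rcases hud with hu | hd
      · exact Or.inl ((isUp_shift hper t y).mpr hu)
      · exact Or.inr ((isDown_shift hper t y).mpr hd)
    · have e2 : Q (t + M) = Q t + (k*p, k*q) := by rw [hper]; rfl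
      have : (Q (t + M)).1 = (Q t).1 + k*p := by rw [e2]; rfl
      omega

end Lemmas

def inS (Q : ℤ → ℤ × ℤ) (k p q b c : ℤ) : Prop :=
  ∃ m, 0 ≤ m ∧ m < k ∧ crossP Q (b - m*q) (c - m*p)

section Lemmas2

variable {Q : ℤ → ℤ × ℤ} {M k p q : ℤ}
variable (hM : 1 ≤ M) (hk : 2 ≤ k) (hq : 1 ≤ q)
  (hadj : ∀ t, gridAdj (Q (t+1)) (Q t))
  (hper : ∀ t, Q (t + M) = Q t + k • ((p, q) : ℤ × ℤ))

include hM hk hq hadj hper in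
lemma inS_nonempty (b : ℤ) : ∃ c, inS Q k p q b c := by
  obtain ⟨t, h⟩ := cross_exists hM hk hq hadj hper b
  refine ⟨(Q t).1, 0, le_rfl, by omega, ?_⟩
  rw [show b - 0*q = b by ring, show (Q t).1 - 0*p = (Q t).1 by ring]
  exact ⟨t, h, rfl⟩

include hM hk hq hadj hper in
lemma inS_bdd (b : ℤ) : ∃ D, ∀ c, inS Q k p q b c → |c| ≤ D := by
  classical
  refine ⟨∑ j ∈ Finset.Icc (0:ℤ) (k-1),
    (|(Q 0).1| + T0 Q M (b - j*q) + T0 Q M (b - j*q + 1) + |j*p|), ?_⟩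
  rintro c ⟨m, hm0, hmk, hcr⟩
  have h1 := crossP_bound hM hk hq hadj hper hcr
  have hmem : m ∈ Finset.Icc (0:ℤ) (k-1) := by simp only [Finset.mem_Icc]; omega
  have hj := Finset.single_le_sum
    (f := fun j : ℤ => |(Q 0).1| + T0 Q M (b - j*q) + T0 Q M (b - j*q + 1) + |j*p|)
    (fun j _ => by
      have h2 := T0_nonneg (Q := Q) hM (b - j*q)
      have h3 := T0_nonneg (Q := Q) hM (b - j*q + 1)
      have h4 := abs_nonneg (j*p)
      have h5 := abs_nonneg ((Q 0).1)
      show (0:ℤ) ≤ |(Q 0).1| + T0 Q M (b - j*q) + T0 Q M (b - j*q + 1) + |j*p|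
      omega) hmem
  have htri : |c| ≤ |c - m*p| + |m*p| := by
    rcases abs_cases c with ⟨e,_⟩|⟨e,_⟩ <;>
      rcases abs_cases (c - m*p) with ⟨e1,_⟩|⟨e1,_⟩ <;>
      rcases abs_cases (m*p) with ⟨e2,_⟩|⟨e2,_⟩ <;> omega
  omega

variable (hdiv : ∀ s t z, Q s - Q t = z • ((p, q) : ℤ × ℤ) → k ∣ z)

include hk hdiv in
lemma inS_uniq {b c m m' : ℤ} (h : 0 ≤ m ∧ m < k ∧ crossP Q (b - m*q) (c - m*p))
    (h' : 0 ≤ m' ∧ m' < k ∧ crossP Q (b - m'*q) (c - m'*p)) : m = m' := by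
  obtain ⟨s, hs⟩ := (crossP_point h.2.2).1
  obtain ⟨s', hs'⟩ := (crossP_point h'.2.2).1
  have hsub : Q s - Q s' = (m' - m) • ((p,q) : ℤ × ℤ) := by
    rw [hs, hs']
    show ((c - m*p, b - m*q) : ℤ×ℤ) - (c - m'*p, b - m'*q) = ((m'-m)*p, (m'-m)*q)
    rw [Prod.mk_sub_mk, Prod.mk.injEq]
    constructor <;> ring
  have hdvd := hdiv s s' (m' - m) hsub
  have := Int.eq_zero_of_abs_lt_dvd hdvd (abs_lt.mpr ⟨by omega, by omega⟩)
  omega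

include hk hper in
lemma inS_shift (b c : ℤ) : inS Q k p q (b + q) c ↔ inS Q k p q b (c - p) := by
  constructor
  · rintro ⟨m, hm0, hmk, hc⟩
    by_cases h1 : 1 ≤ m
    · refine ⟨m - 1, by omega, by omega, ?_⟩
      rw [show b - (m-1)*q = b + q - m*q by ring, show c - p - (m-1)*p = c - m*p by ring]
      exact hc
    · have hm : m = 0 := by omega
      subst hm
      rw [show b + q - 0*q = b + q by ring, show c - 0*p = c by ring] at hc
      refine ⟨k - 1, by omega, by omega, ?_⟩
      have := (crossP_shift hper (b - (k-1)*q) (c - p - (k-1)*p)).mp ?_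
      · exact this
      · rw [show b - (k-1)*q + k*q = b + q by ring, show c - p - (k-1)*p + k*p = c by ring]
        exact hc
  · rintro ⟨m, hm0, hmk, hc⟩
    by_cases h1 : m + 1 < k
    · refine ⟨m + 1, by omega, h1, ?_⟩
      rw [show b + q - (m+1)*q = b - m*q by ring, show c - (m+1)*p = c - p - m*p by ring]
      exact hc
    · have hm : m = k - 1 := by omega
      subst hm
      refine ⟨0, le_rfl, by omega, ?_⟩
      rw [show b + q - 0*q = (b - (k-1)*q) + k*q by ring,
        show c - 0*p = (c - p - (k-1)*p) + k*p by ring]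
      exact (crossP_shift hper _ _).mpr hc

include hM hk hq hadj hper hdiv in
theorem core : False := by
  classical
  -- least and greatest crossing columns over all k curves
  have hminE : ∀ b : ℤ, ∃ c, inS Q k p q b c ∧ ∀ c', inS Q k p q b c' → c ≤ c' := by
    intro b
    obtain ⟨D, hD⟩ := inS_bdd hM hk hq hadj hper b
    obtain ⟨c0, hc0⟩ := inS_nonempty hM hk hq hadj hper b
    obtain ⟨lb, hlb1, hlb2⟩ := Int.exists_least_of_bdd (P := inS Q k p q b)
      ⟨-D, fun z hz => by have := hD z hz; rw [abs_le] at this; omega⟩ ⟨c0, hc0⟩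
    exact ⟨lb, hlb1, hlb2⟩
  have hmaxE : ∀ b : ℤ, ∃ c, inS Q k p q b c ∧ ∀ c', inS Q k p q b c' → c' ≤ c := by
    intro b
    obtain ⟨D, hD⟩ := inS_bdd hM hk hq hadj hper b
    obtain ⟨c0, hc0⟩ := inS_nonempty hM hk hq hadj hper b
    obtain ⟨ub, hub1, hub2⟩ := Int.exists_greatest_of_bdd (P := inS Q k p q b)
      ⟨D, fun z hz => by have := hD z hz; rw [abs_le] at this; omega⟩ ⟨c0, hc0⟩
    exact ⟨ub, hub1, hub2⟩
  choose cmin hcmin hmin2 using hminE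
  choose cmax hcmax hmax2 using hmaxE
  choose mf hf0 hfk hfc using hcmin
  choose mg hg0 hgk hgc using hcmax
  -- shift of extremal columns
  have hshiftmin : ∀ b, cmin (b + q) = cmin b + p := by
    intro b
    have h1 : inS Q k p q (b+q) (cmin b + p) := by
      rw [inS_shift hk hper]
      rw [show cmin b + p - p = cmin b by ring]
      exact ⟨mf b, hf0 b, hfk b, hfc b⟩
    have h2 := hmin2 (b+q) _ h1
    have h3 : inS Q k p q b (cmin (b+q) - p) := by
      rw [← inS_shift hk hper]
      exact ⟨mf (b+q), hf0 (b+q), hfk (b+q), hfc (b+q)⟩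
    have h4 := hmin2 b _ h3
    omega
  have hshiftmax : ∀ b, cmax (b + q) = cmax b + p := by
    intro b
    have h1 : inS Q k p q (b+q) (cmax b + p) := by
      rw [inS_shift hk hper]
      rw [show cmax b + p - p = cmax b by ring]
      exact ⟨mg b, hg0 b, hgk b, hgc b⟩
    have h2 := hmax2 (b+q) _ h1
    have h3 : inS Q k p q b (cmax (b+q) - p) := by
      rw [← inS_shift hk hper]
      exact ⟨mg (b+q), hg0 (b+q), hgk (b+q), hgc (b+q)⟩
    have h4 := hmax2 b _ h3
    omega
  -- recursion for the witness indices
  have hrecf : ∀ b, mf (b + q) = if mf b = k - 1 then 0 else mf b + 1 := by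
    intro b
    have hcand : crossP Q ((b + q) - (if mf b = k - 1 then 0 else mf b + 1)*q)
        (cmin (b+q) - (if mf b = k - 1 then 0 else mf b + 1)*p) := by
      rw [hshiftmin b]
      split_ifs with hcase
      · rw [show b + q - 0*q = (b - (k-1)*q) + k*q by ring,
          show cmin b + p - 0*p = (cmin b - (k-1)*p) + k*p by ring]
        apply (crossP_shift hper _ _).mpr
        have := hfc b
        rw [hcase] at this
        exact this
      · rw [show b + q - (mf b + 1)*q = b - (mf b)*q by ring,
          show cmin b + p - (mf b + 1)*p = cmin b - (mf b)*p by ring]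
        exact hfc b
    have hr1 : 0 ≤ (if mf b = k - 1 then 0 else mf b + 1) := by
      have := hf0 b
      split_ifs <;> omega
    have hr2 : (if mf b = k - 1 then 0 else mf b + 1) < k := by
      have h1 := hf0 b
      have h2 := hfk b
      split_ifs <;> omega
    exact inS_uniq hk hdiv ⟨hf0 (b+q), hfk (b+q), hfc (b+q)⟩ ⟨hr1, hr2, hcand⟩
  have hrecg : ∀ b, mg (b + q) = if mg b = k - 1 then 0 else mg b + 1 := by
    intro b
    have hcand : crossP Q ((b + q) - (if mg b = k - 1 then 0 else mg b + 1)*q)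
        (cmax (b+q) - (if mg b = k - 1 then 0 else mg b + 1)*p) := by
      rw [hshiftmax b]
      split_ifs with hcase
      · rw [show b + q - 0*q = (b - (k-1)*q) + k*q by ring,
          show cmax b + p - 0*p = (cmax b - (k-1)*p) + k*p by ring]
        apply (crossP_shift hper _ _).mpr
        have := hgc b
        rw [hcase] at this
        exact this
      · rw [show b + q - (mg b + 1)*q = b - (mg b)*q by ring,
          show cmax b + p - (mg b + 1)*p = cmax b - (mg b)*p by ring]
        exact hgc b
    have hr1 : 0 ≤ (if mg b = k - 1 then 0 else mg b + 1) := by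
      have := hg0 b
      split_ifs <;> omega
    have hr2 : (if mg b = k - 1 then 0 else mg b + 1) < k := by
      have h1 := hg0 b
      have h2 := hgk b
      split_ifs <;> omega
    exact inS_uniq hk hdiv ⟨hg0 (b+q), hgk (b+q), hgc (b+q)⟩ ⟨hr1, hr2, hcand⟩
  -- iteration
  have hiterf : ∀ (a : ℕ) (b : ℤ), mf (b + (a:ℤ)*q) = (mf b + (a:ℤ)) % k := by
    intro a
    induction a with
    | zero =>
        intro b
        have e : b + ((0:ℕ):ℤ)*q = b := by push_cast; ring
        have e2 : mf b + ((0:ℕ):ℤ) = mf b := by push_cast; ring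
        rw [e, e2]
        exact (Int.emod_eq_of_lt (hf0 b) (hfk b)).symm
    | succ n ih =>
        intro b
        have e : b + ((n+1:ℕ):ℤ)*q = (b + (n:ℤ)*q) + q := by push_cast; ring
        rw [e, hrecf (b + (n:ℤ)*q), ih b]
        have h0 : 0 ≤ (mf b + (n:ℤ)) % k := Int.emod_nonneg _ (by omega)
        have h1 : (mf b + (n:ℤ)) % k < k := Int.emod_lt_of_pos _ (by omega)
        have e2 : (mf b + ((n+1:ℕ):ℤ)) % k = ((mf b + (n:ℤ)) % k + 1) % k := by
          push_cast
          rw [show mf b + ((n:ℤ) + 1) = (mf b + (n:ℤ)) + 1 by ring]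
          rw [Int.add_emod (mf b + (n:ℤ)) 1 k,
            Int.emod_eq_of_lt (show (0:ℤ) ≤ 1 by omega) (show (1:ℤ) < k by omega)]
        rw [e2]
        split_ifs with hcase
        · rw [hcase, show k - 1 + 1 = k by ring, Int.emod_self]
        · have e3 : ((mf b + (n:ℤ)) % k + 1) % k = (mf b + (n:ℤ)) % k + 1 :=
            Int.emod_eq_of_lt (by omega) (by omega)
          rw [e3]
  have hiterg : ∀ (a : ℕ) (b : ℤ), mg (b + (a:ℤ)*q) = (mg b + (a:ℤ)) % k := by
    intro a
    induction a with
    | zero =>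
        intro b
        have e : b + ((0:ℕ):ℤ)*q = b := by push_cast; ring
        have e2 : mg b + ((0:ℕ):ℤ) = mg b := by push_cast; ring
        rw [e, e2]
        exact (Int.emod_eq_of_lt (hg0 b) (hgk b)).symm
    | succ n ih =>
        intro b
        have e : b + ((n+1:ℕ):ℤ)*q = (b + (n:ℤ)*q) + q := by push_cast; ring
        rw [e, hrecg (b + (n:ℤ)*q), ih b]
        have h0 : 0 ≤ (mg b + (n:ℤ)) % k := Int.emod_nonneg _ (by omega)
        have h1 : (mg b + (n:ℤ)) % k < k := Int.emod_lt_of_pos _ (by omega)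
        have e2 : (mg b + ((n+1:ℕ):ℤ)) % k = ((mg b + (n:ℤ)) % k + 1) % k := by
          push_cast
          rw [show mg b + ((n:ℤ) + 1) = (mg b + (n:ℤ)) + 1 by ring]
          rw [Int.add_emod (mg b + (n:ℤ)) 1 k,
            Int.emod_eq_of_lt (show (0:ℤ) ≤ 1 by omega) (show (1:ℤ) < k by omega)]
        rw [e2]
        split_ifs with hcase
        · rw [hcase, show k - 1 + 1 = k by ring, Int.emod_self]
        · have e3 : ((mg b + (n:ℤ)) % k + 1) % k = (mg b + (n:ℤ)) % k + 1 :=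
            Int.emod_eq_of_lt (by omega) (by omega)
          rw [e3]
  -- find levels where the index-1 curve is extremal
  have h1f : ∃ b, mf b = 1 := by
    have hb0 := hf0 0
    have hbk := hfk 0
    have hcast : (((2*k + 1 - mf 0).toNat : ℕ) : ℤ) = 2*k + 1 - mf 0 :=
      Int.toNat_of_nonneg (by omega)
    refine ⟨0 + (((2*k + 1 - mf 0).toNat : ℕ) : ℤ)*q, ?_⟩
    rw [hiterf (2*k + 1 - mf 0).toNat 0, hcast,
      show mf 0 + (2*k + 1 - mf 0) = 1 + k*2 by ring, Int.add_mul_emod_self_left]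
    exact Int.emod_eq_of_lt (by omega) (by omega)
  have h1g : ∃ b, mg b = 1 := by
    have hb0 := hg0 0
    have hbk := hgk 0
    have hcast : (((2*k + 1 - mg 0).toNat : ℕ) : ℤ) = 2*k + 1 - mg 0 :=
      Int.toNat_of_nonneg (by omega)
    refine ⟨0 + (((2*k + 1 - mg 0).toNat : ℕ) : ℤ)*q, ?_⟩
    rw [hiterg (2*k + 1 - mg 0).toNat 0, hcast,
      show mg 0 + (2*k + 1 - mg 0) = 1 + k*2 by ring, Int.add_mul_emod_self_left]
    exact Int.emod_eq_of_lt (by omega) (by omega)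
  obtain ⟨b1, hb1⟩ := h1f
  obtain ⟨b2, hb2⟩ := h1g
  -- H is constant on the curve Q + (p,q)
  have hk1 : ¬ ((k:ℤ) ∣ 1) := by
    intro hdvd
    have := Int.eq_one_of_dvd_one (by omega) hdvd
    omega
  have hnotQ : ∀ s t, Q s ≠ Q t + ((p,q) : ℤ × ℤ) := by
    intro s t h
    apply hk1
    apply hdiv s t 1
    rw [h, one_smul]
    abel
  have hconst : ∀ t : ℤ, HH Q M (Q t + ((p,q) : ℤ × ℤ)) = HH Q M (Q 0 + ((p,q) : ℤ × ℤ)) := by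
    intro t
    induction t using Int.induction_on with
    | zero => rfl
    | succ n ih =>
        rw [← ih]
        exact H_adj hM hk hq hadj hper
          (gridAdj_translate (gridAdj_comm (hadj (n:ℤ))))
          (fun s => hnotQ s ((n:ℤ)+1)) (fun s => hnotQ s (n:ℤ))
    | pred n ih =>
        rw [← ih]
        have hs := hadj (-(n:ℤ) - 1)
        rw [show -(n:ℤ) - 1 + 1 = -(n:ℤ) by ring] at hs
        exact H_adj hM hk hq hadj hper (P := Q (-(n:ℤ) - 1) + ((p,q) : ℤ × ℤ))
          (P' := Q (-(n:ℤ)) + ((p,q) : ℤ × ℤ))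
          (gridAdj_translate hs)
          (fun s => hnotQ s (-(n:ℤ) - 1)) (fun s => hnotQ s (-(n:ℤ)))
  -- value 1 at level b1
  have hcr1 : crossP Q (b1 - q) (cmin b1 - p) := by
    have := hfc b1
    rw [hb1, one_mul, one_mul] at this
    exact this
  obtain ⟨s1, hs1⟩ := (crossP_point hcr1).1
  have hP1 : ((cmin b1, b1) : ℤ × ℤ) = Q s1 + ((p,q) : ℤ × ℤ) := by
    rw [hs1]
    rw [Prod.mk_add_mk, Prod.mk.injEq]
    constructor <;> ring
  have hH1 : HH Q M (cmin b1, b1) = 1 := by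
    apply H_all hM hk hq hadj hper
    intro t ht
    have hin : inS Q k p q b1 ((Q t).1) := by
      refine ⟨0, le_rfl, by omega, ?_⟩
      rw [show b1 - 0*q = b1 by ring, show (Q t).1 - 0*p = (Q t).1 by ring]
      exact ⟨t, ht, rfl⟩
    exact hmin2 b1 _ hin
  -- value 0 at level b2
  have hcr2 : crossP Q (b2 - q) (cmax b2 - p) := by
    have := hgc b2
    rw [hb2, one_mul, one_mul] at this
    exact this
  obtain ⟨s2, hs2⟩ := (crossP_point hcr2).1
  have hP2 : ((cmax b2, b2) : ℤ × ℤ) = Q s2 + ((p,q) : ℤ × ℤ) := by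
    rw [hs2]
    rw [Prod.mk_add_mk, Prod.mk.injEq]
    constructor <;> ring
  have hH2 : HH Q M (cmax b2, b2) = 0 := by
    apply H_none
    intro t ht
    have hin : inS Q k p q b2 ((Q t).1) := by
      refine ⟨0, le_rfl, by omega, ?_⟩
      rw [show b2 - 0*q = b2 by ring, show (Q t).1 - 0*p = (Q t).1 by ring]
      exact ⟨t, ht, rfl⟩
    have hle := hmax2 b2 _ hin
    rcases eq_or_lt_of_le hle with heq | hlt
    · exfalso
      have h0w : (0:ℤ) = 1 := by
        apply inS_uniq hk hdiv (b := b2) (c := cmax b2)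
        · refine ⟨le_rfl, by omega, ?_⟩
          rw [show b2 - 0*q = b2 by ring, show cmax b2 - 0*p = cmax b2 by ring, ← heq]
          exact ⟨t, ht, rfl⟩
        · refine ⟨by omega, by omega, ?_⟩
          rw [one_mul, one_mul]
          exact hcr2
      omega
    · exact hlt
  rw [hP1, hconst s1] at hH1
  rw [hP2, hconst s2] at hH2
  omega

end Lemmas2
end Core

lemma gridAdj_neg {a b : ℤ × ℤ} (h : gridAdj a b) : gridAdj (-a) (-b) := by
  apply gridAdj_of_cases
  have := gridAdj_cases h
  simp only [Prod.fst_neg, Prod.snd_neg]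
  rcases this with ⟨h1,h2⟩|⟨h1,h2⟩|⟨h1,h2⟩|⟨h1,h2⟩ <;> omega

lemma gridAdj_swap {a b : ℤ × ℤ} (h : gridAdj a b) : gridAdj (a.2, a.1) (b.2, b.1) := by
  apply gridAdj_of_cases
  have := gridAdj_cases h
  simp only []
  rcases this with ⟨h1,h2⟩|⟨h1,h2⟩|⟨h1,h2⟩|⟨h1,h2⟩ <;> omega

theorem core2 (Q : ℤ → ℤ × ℤ) (M k : ℤ) (u : ℤ × ℤ) (hM : 1 ≤ M) (hk : 2 ≤ k) (hu : u ≠ 0)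
    (hadj : ∀ t, gridAdj (Q (t+1)) (Q t))
    (hper : ∀ t, Q (t + M) = Q t + k • u)
    (hdiv : ∀ s t z, Q s - Q t = z • u → k ∣ z) : False := by
  obtain ⟨p, q⟩ := u
  have hper1 : ∀ t, (Q (t + M)).1 = (Q t).1 + k * p := fun t => by rw [hper t]; rfl
  have hper2 : ∀ t, (Q (t + M)).2 = (Q t).2 + k * q := fun t => by rw [hper t]; rfl
  rcases lt_trichotomy q 0 with hq | hq | hq
  · -- q ≤ -1 : negate
    apply core (Q := fun t => -(Q t)) (M := M) (k := k) (p := -p) (q := -q) hM hk (by omega)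
    · intro t
      exact gridAdj_neg (hadj t)
    · intro t
      have e : k * (-p) = -(k*p) := by ring
      have e2 : k * (-q) = -(k*q) := by ring
      refine Prod.ext_iff.mpr ⟨?_, ?_⟩
      · show -(Q (t + M)).1 = -(Q t).1 + k * (-p)
        have := hper1 t
        omega
      · show -(Q (t + M)).2 = -(Q t).2 + k * (-q)
        have := hper2 t
        omega
    · intro s t z h
      apply hdiv s t z
      have h1 : -(Q s).1 - (-(Q t).1) = z * (-p) := by
        have := congrArg Prod.fst h
        simpa using this
      have h2 : -(Q s).2 - (-(Q t).2) = z * (-q) := by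
        have := congrArg Prod.snd h
        simpa using this
      refine Prod.ext_iff.mpr ⟨?_, ?_⟩
      · show (Q s).1 - (Q t).1 = z * p
        have e : z * (-p) = -(z*p) := by ring
        omega
      · show (Q s).2 - (Q t).2 = z * q
        have e : z * (-q) = -(z*q) := by ring
        omega
  · -- q = 0, swap coordinates
    subst hq
    have hp : p ≠ 0 := by
      intro h
      exact hu (by rw [h]; rfl)
    rcases lt_trichotomy p 0 with hp1 | hp1 | hp1
    · -- p ≤ -1 : swap and negate
      apply core (Q := fun t => (-(Q t).2, -(Q t).1)) (M := M) (k := k) (p := 0) (q := -p)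
        hM hk (by omega)
      · intro t
        exact gridAdj_neg (gridAdj_swap (hadj t))
      · intro t
        have e : k * (-p) = -(k*p) := by ring
        refine Prod.ext_iff.mpr ⟨?_, ?_⟩
        · show -(Q (t + M)).2 = -(Q t).2 + k * 0
          have := hper2 t
          omega
        · show -(Q (t + M)).1 = -(Q t).1 + k * (-p)
          have := hper1 t
          omega
      · intro s t z h
        apply hdiv s t z
        have h1 : -(Q s).2 - (-(Q t).2) = z * 0 := by
          have := congrArg Prod.fst h
          simpa using this
        have h2 : -(Q s).1 - (-(Q t).1) = z * (-p) := by
          have := congrArg Prod.snd h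
          simpa using this
        refine Prod.ext_iff.mpr ⟨?_, ?_⟩
        · show (Q s).1 - (Q t).1 = z * p
          have e : z * (-p) = -(z*p) := by ring
          omega
        · show (Q s).2 - (Q t).2 = z * 0
          omega
    · omega
    · -- p ≥ 1 : swap
      apply core (Q := fun t => ((Q t).2, (Q t).1)) (M := M) (k := k) (p := 0) (q := p)
        hM hk (by omega)
      · intro t
        exact gridAdj_swap (hadj t)
      · intro t
        refine Prod.ext_iff.mpr ⟨?_, ?_⟩
        · show (Q (t + M)).2 = (Q t).2 + k * 0
          have := hper2 t
          omega
        · show (Q (t + M)).1 = (Q t).1 + k * p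
          exact hper1 t
      · intro s t z h
        apply hdiv s t z
        have h1 : (Q s).2 - (Q t).2 = z * 0 := by
          have := congrArg Prod.fst h
          simpa using this
        have h2 : (Q s).1 - (Q t).1 = z * p := by
          have := congrArg Prod.snd h
          simpa using this
        exact Prod.ext_iff.mpr ⟨h2, h1⟩
  · -- q ≥ 1 : direct
    exact core (Q := Q) (M := M) (k := k) (p := p) (q := q) hM hk (by omega) hadj hper hdiv

lemma smul_pair_zero {z : ℤ} {u : ℤ × ℤ} (h : z • u = 0) (hz : z ≠ 0) : u = 0 := by
  obtain ⟨u1, u2⟩ := u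
  have h1 : z * u1 = 0 := by have := congrArg Prod.fst h; simpa using this
  have h2 : z * u2 = 0 := by have := congrArg Prod.snd h; simpa using this
  rcases mul_eq_zero.mp h1 with h | h
  · exact absurd h hz
  · rcases mul_eq_zero.mp h2 with h' | h'
    · exact absurd h' hz
    · rw [Prod.mk.injEq]; exact ⟨h, h'⟩

lemma walk_of_rtg {S : Finset (ℤ × ℤ)} {x y : ℤ × ℤ} (hx : x ∈ S)
    (h : Relation.ReflTransGen (fun a b => a ∈ S ∧ b ∈ S ∧ gridAdj a b) x y) :
    ∃ (L : ℕ) (f : ℕ → ℤ × ℤ), f 0 = x ∧ f L = y ∧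
      (∀ i, i < L → gridAdj (f (i+1)) (f i)) ∧ (∀ i, i ≤ L → f i ∈ S) := by
  induction h with
  | refl => exact ⟨0, fun _ => x, rfl, rfl, fun i hi => absurd hi (by omega),
      fun i hi => by simpa using hx⟩
  | @tail b c hxb hr ih =>
      obtain ⟨L, f, hf0, hfL, hfadj, hfmem⟩ := ih
      classical
      refine ⟨L + 1, fun i => if i ≤ L then f i else c, ?_, ?_, ?_, ?_⟩
      · show (if 0 ≤ L then f 0 else c) = x
        rw [if_pos (Nat.zero_le L)]; exact hf0
      · show (if L + 1 ≤ L then f (L+1) else c) = c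
        rw [if_neg (by omega)]
      · intro i hi
        show gridAdj (if i + 1 ≤ L then f (i+1) else c) (if i ≤ L then f i else c)
        by_cases hiL : i < L
        · rw [if_pos (by omega : i + 1 ≤ L), if_pos (by omega : i ≤ L)]
          exact hfadj i hiL
        · have hieq : i = L := by omega
          rw [hieq, if_neg (by omega), if_pos le_rfl, hfL]
          exact gridAdj_comm hr.2.2
      · intro i hi
        show (if i ≤ L then f i else c) ∈ S
        by_cases hiL : i ≤ L
        · rw [if_pos hiL]; exact hfmem i hiL
        · rw [if_neg hiL]; exact hr.2.1

theorem reduce (u : ℤ × ℤ) (hu : u ≠ 0) (Mn : ℕ) (hMn : 1 ≤ Mn) (k : ℤ) (hk : 2 ≤ k)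
    (g : ℕ → ℤ × ℤ)
    (hadjg : ∀ i, i < Mn → gridAdj (g (i+1)) (g i))
    (hend : g Mn - g 0 = k • u)
    (htaut : ∀ (i j : ℕ) (z : ℤ), i ≤ Mn → j ≤ Mn → z ≠ 0 → g j - g i = z • u →
      (i = Mn ∧ j = 0) ∨ (i = 0 ∧ j = Mn)) : False := by
  classical
  set N : ℤ := (Mn : ℤ) with hN
  have hN1 : 1 ≤ N := by omega
  set Q : ℤ → ℤ × ℤ := fun t => g ((t % N).toNat) + (t / N) • (k • u) with hQ
  have hdecomp : ∀ t : ℤ, 0 ≤ t % N ∧ t % N < N ∧ N * (t / N) + t % N = t :=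
    fun t => ⟨Int.emod_nonneg t (by omega), Int.emod_lt_of_pos t (by omega),
      Int.mul_ediv_add_emod t N⟩
  have hgM : g Mn = g 0 + k • u := by
    have := hend
    rw [sub_eq_iff_eq_add] at this
    rw [this]; abel
  -- periodicity
  have hper : ∀ t, Q (t + N) = Q t + k • u := by
    intro t
    have e1 : (t + N) % N = t % N := by
      rw [show t + N = t + N * 1 by ring, Int.add_mul_emod_self_left]
    have e2 : (t + N) / N = t / N + 1 := by
      rw [show t + N = t + N * 1 by ring, Int.add_mul_ediv_left t 1 (by omega : N ≠ 0)]
    rw [hQ]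
    simp only [e1, e2]
    rw [add_smul, one_smul]
    abel
  -- adjacency
  have hadjQ : ∀ t, gridAdj (Q (t + 1)) (Q t) := by
    intro t
    obtain ⟨hr0, hr1, hdec⟩ := hdecomp t
    set r := t % N with hr
    set c := t / N with hc
    by_cases hcase : r + 1 < N
    · have e1 : (t + 1) % N = r + 1 := by
        rw [show t + 1 = (r + 1) + N * c by omega, Int.add_mul_emod_self_left]
        exact Int.emod_eq_of_lt (by omega) hcase
      have e2 : (t + 1) / N = c := by
        rw [show t + 1 = (r + 1) + N * c by omega,
          Int.add_mul_ediv_left _ c (by omega : N ≠ 0),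
          Int.ediv_eq_zero_of_lt (by omega) hcase, zero_add]
      rw [hQ]
      simp only [e1, e2]
      have htn : (r + 1).toNat = r.toNat + 1 := by omega
      rw [htn]
      exact gridAdj_translate (hadjg r.toNat (by omega))
    · have hrM : r = N - 1 := by omega
      have hNc : N * (c + 1) = N * c + N := by ring
      have e1 : (t + 1) % N = 0 := by
        rw [show t + 1 = 0 + N * (c + 1) by omega, Int.add_mul_emod_self_left]
        exact Int.emod_eq_of_lt (by omega) (by omega)
      have e2 : (t + 1) / N = c + 1 := by
        rw [show t + 1 = 0 + N * (c + 1) by omega,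
          Int.add_mul_ediv_left _ (c+1) (by omega : N ≠ 0),
          Int.ediv_eq_zero_of_lt (by omega) (by omega), zero_add]
      rw [hQ]
      simp only [e1, e2]
      have hq1 : g ((0:ℤ).toNat) + (c + 1) • (k • u) = (g Mn + c • (k • u)) := by
        rw [show (0:ℤ).toNat = 0 from rfl, hgM, add_smul, one_smul]
        abel
      rw [hq1]
      have htn : r.toNat = Mn - 1 := by omega
      rw [htn]
      have := hadjg (Mn - 1) (by omega)
      rw [show Mn - 1 + 1 = Mn by omega] at this
      exact gridAdj_translate this
  -- divisibility
  have hdivQ : ∀ s t z, Q s - Q t = z • u → k ∣ z := by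
    intro s t z h
    obtain ⟨hr0s, hr1s, hdecs⟩ := hdecomp s
    obtain ⟨hr0t, hr1t, hdect⟩ := hdecomp t
    have hsub : Q s - Q t = (g ((s % N).toNat) - g ((t % N).toNat))
        + ((s / N - t / N) * k) • u := by
      rw [hQ]
      simp only []
      rw [smul_smul, smul_smul,
        show ((s / N - t / N) * k) • u = (s / N * k) • u - (t / N * k) • u by
          rw [show (s / N - t / N) * k = s / N * k - t / N * k by ring, sub_smul]]
      abel
    rw [hsub] at h
    have hkey : g ((s % N).toNat) - g ((t % N).toNat) = (z - (s / N - t / N) * k) • u := by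
      rw [sub_smul, ← h]
      abel
    by_cases hw : z - (s / N - t / N) * k = 0
    · refine ⟨s / N - t / N, ?_⟩
      have hcom : k * (s / N - t / N) = (s / N - t / N) * k := by ring
      omega
    · have := htaut ((t % N).toNat) ((s % N).toNat) _ (by omega) (by omega) hw hkey
      omega

  exact core2 Q N k u hN1 hk hu hadjQ hper hdivQ

def realises (S : Finset (ℤ × ℤ)) (v : ℤ × ℤ) : Prop := ∃ a ∈ S, ∃ b ∈ S, a - b = v

def connectedIn (S : Finset (ℤ × ℤ)) : Prop :=
  ∀ a ∈ S, ∀ b ∈ S, Relation.ReflTransGen (fun x y => x ∈ S ∧ y ∈ S ∧ gridAdj x y) a b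

/-- Discrete universal chord theorem: if a finite connected subgraph of the grid graph on
`ℤ²` realises `n • u` for a positive integer `n`, then it realises `u`. -/
theorem discrete_universal_chord (S : Finset (ℤ × ℤ)) (hconn : connectedIn S)
    (u : ℤ × ℤ) (n : ℕ) (hn : 0 < n) (h : realises S ((n : ℤ) • u)) :
    realises S u := by
  classical
  obtain ⟨a, ha, b, hb, hab⟩ := h
  by_cases hu0 : u = 0
  · exact ⟨a, ha, a, ha, by rw [hu0, sub_self]⟩
  by_contra hno
  obtain ⟨L, f, hf0, hfL, hfadj, hfmem⟩ := walk_of_rtg hb (hconn b hb a ha)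
  -- no chord ±u in S along f
  have chord : ∀ i j z, i ≤ L → j ≤ L → f j - f i = z • u → z ≠ 1 ∧ z ≠ -1 := by
    intro i j z hi hj heq
    constructor
    · rintro rfl
      exact hno ⟨f j, hfmem j hj, f i, hfmem i hi, by rw [heq, one_smul]⟩
    · rintro rfl
      refine hno ⟨f i, hfmem i hi, f j, hfmem j hj, ?_⟩
      have e : f i - f j = -(f j - f i) := by abel
      rw [e, heq]
      simp
  -- minimal window with a nonzero multiple of u as difference
  have hex : ∃ d : ℕ, ∃ (i : ℕ) (z : ℤ), i + d ≤ L ∧ z ≠ 0 ∧ f (i + d) - f i = z • u := by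
    refine ⟨L, 0, (n : ℤ), by omega, by exact_mod_cast hn.ne', ?_⟩
    simp only [Nat.zero_add]
    rw [hfL, hf0]
    exact hab
  set d0 := Nat.find hex with hd0def
  obtain ⟨i0, z0, hiL, hz0, hdiff⟩ := Nat.find_spec hex
  rw [← hd0def] at hiL hdiff
  have hmin : ∀ d, d < d0 → ¬ ∃ (i : ℕ) (z : ℤ), i + d ≤ L ∧ z ≠ 0 ∧ f (i + d) - f i = z • u :=
    fun d hd => Nat.find_min hex hd
  have hd0pos : 1 ≤ d0 := by
    by_contra hcon
    have hd00 : d0 = 0 := by omega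
    rw [hd00] at hdiff
    simp only [Nat.add_zero, sub_self] at hdiff
    exact hu0 (smul_pair_zero hdiff.symm hz0)
  -- tautness of the window
  have htaut : ∀ (i j : ℕ) (z : ℤ), i ≤ d0 → j ≤ d0 → z ≠ 0 →
      f (i0 + j) - f (i0 + i) = z • u → (i = d0 ∧ j = 0) ∨ (i = 0 ∧ j = d0) := by
    intro i j z hi hj hz heq
    rcases lt_trichotomy i j with hij | hij | hij
    · have hPd : ∃ (i' : ℕ) (z' : ℤ), i' + (j - i) ≤ L ∧ z' ≠ 0 ∧ f (i' + (j - i)) - f i' = z' • u := by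
        refine ⟨i0 + i, z, by omega, hz, ?_⟩
        rw [show i0 + i + (j - i) = i0 + j by omega]
        exact heq
      have hnlt : ¬ (j - i < d0) := fun hlt => hmin _ hlt hPd
      right
      omega
    · subst hij
      rw [sub_self] at heq
      exact absurd (smul_pair_zero heq.symm hz) hu0
    · have hPd : ∃ (i' : ℕ) (z' : ℤ), i' + (i - j) ≤ L ∧ z' ≠ 0 ∧ f (i' + (i - j)) - f i' = z' • u := by
        refine ⟨i0 + j, -z, by omega, neg_ne_zero.mpr hz, ?_⟩
        rw [show i0 + j + (i - j) = i0 + i by omega]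
        rw [show f (i0 + i) - f (i0 + j) = -(f (i0 + j) - f (i0 + i)) by abel, heq, neg_smul]
      have hnlt : ¬ (i - j < d0) := fun hlt => hmin _ hlt hPd
      left
      omega
  -- |z0| ≥ 2
  have hz2 : 2 ≤ z0 ∨ z0 ≤ -2 := by
    have := chord i0 (i0 + d0) z0 (by omega) (by omega) hdiff
    omega
  rcases hz2 with hpos | hneg
  · -- forward orientation
    apply reduce u hu0 d0 hd0pos z0 hpos (fun i => f (i0 + i))
    · intro i hi
      have := hfadj (i0 + i) (by omega)
      rw [show i0 + i + 1 = i0 + (i + 1) by omega] at this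
      exact this
    · show f (i0 + d0) - f (i0 + 0) = z0 • u
      rw [Nat.add_zero]
      exact hdiff
    · intro i j z hi hj hz heq
      exact htaut i j z hi hj hz heq
  · -- reverse orientation
    apply reduce u hu0 d0 hd0pos (-z0) (by omega) (fun i => f (i0 + (d0 - i)))
    · intro i hi
      show gridAdj (f (i0 + (d0 - (i+1)))) (f (i0 + (d0 - i)))
      have := hfadj (i0 + (d0 - (i + 1))) (by omega)
      rw [show i0 + (d0 - (i+1)) + 1 = i0 + (d0 - i) by omega] at this
      exact gridAdj_comm this
    · show f (i0 + (d0 - d0)) - f (i0 + (d0 - 0)) = (-z0) • u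
      rw [Nat.sub_self, Nat.sub_zero, Nat.add_zero]
      rw [show f i0 - f (i0 + d0) = -(f (i0 + d0) - f i0) by abel, hdiff, neg_smul]
    · intro i j z hi hj hz heq
      have := htaut (d0 - i) (d0 - j) z (by omega) (by omega) hz heq
      omega
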